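/- Let n ≥ 3. The sequence x_k = 1 - (n/(n-1))^k · n/(2(n-1)) tends to -∞ as k → ∞, and there exists a smallest integer K₀ ≥ 0 with x_{K₀} ≤ 1/n. Moreover 0 < x_{K₀} < 1/n, i.e. the value x_{K₀} lies strictly between 0 and 1/n. -/

import Mathlib

lemma pow_ne_two_mul (n m : ℕ) (hn : 3 ≤ n) (hm : 1 ≤ m) :
    n ^ m ≠ 2 * (n - 1) ^ m := by
  intro h
  have hcop : Nat.Coprime n (n - 1) :=
    (Nat.coprime_self_sub_right (by omega)).2 (Nat.coprime_one_right n)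
  have hdvd : n ^ m ∣ 2 := (hcop.pow m m).dvd_of_dvd_mul_right (h ▸ dvd_refl _)
  have : n ^ m ≤ 2 := Nat.le_of_dvd (by norm_num) hdvd
  have : 3 ≤ n ^ m := le_trans hn (Nat.le_self_pow (by omega) n)
  omega

theorem bootstrap_terminal_exponent (n : ℕ) (hn : 3 ≤ n)
    (x : ℕ → ℝ) (hx : ∀ k, x k = 1 - ((n : ℝ) / (n - 1)) ^ k * (n / (2 * (n - 1)))) :
    Filter.Tendsto x Filter.atTop Filter.atBot ∧
    ∃ K₀ : ℕ, (x K₀ ≤ 1 / n ∧ ∀ k < K₀, ¬ x k ≤ 1 / n) ∧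
      0 < x K₀ ∧ x K₀ < 1 / n := by
  have hN : (3:ℝ) ≤ (n:ℝ) := by exact_mod_cast hn
  have hN1 : (0:ℝ) < (n:ℝ) - 1 := by linarith
  have hNpos : (0:ℝ) < (n:ℝ) := by linarith
  have hr1 : 1 < (n:ℝ)/((n:ℝ)-1) := (one_lt_div hN1).2 (by linarith)
  have hc : 0 < (n:ℝ)/(2*((n:ℝ)-1)) := by positivity
  have htend : Filter.Tendsto x Filter.atTop Filter.atBot := by
    have h1 : Filter.Tendsto (fun k : ℕ => ((n:ℝ)/((n:ℝ)-1))^k) Filter.atTop Filter.atTop :=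
      tendsto_pow_atTop_atTop_of_one_lt hr1
    have h2 : Filter.Tendsto
        (fun k : ℕ => ((n:ℝ)/((n:ℝ)-1))^k * ((n:ℝ)/(2*((n:ℝ)-1)))) Filter.atTop Filter.atTop :=
      h1.atTop_mul_const hc
    have h3 : Filter.Tendsto
        (fun k : ℕ => -(((n:ℝ)/((n:ℝ)-1))^k * ((n:ℝ)/(2*((n:ℝ)-1))))) Filter.atTop Filter.atBot :=
      Filter.tendsto_neg_atTop_atBot.comp h2
    have h4 := Filter.tendsto_atBot_add_const_left Filter.atTop (1:ℝ) h3
    have : x = fun k => 1 + -(((n:ℝ)/((n:ℝ)-1))^k * ((n:ℝ)/(2*((n:ℝ)-1)))) := by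
      funext k; rw [hx k]; ring
    rw [this]; exact h4
  refine ⟨htend, ?_⟩
  have hex : ∃ k, x k ≤ 1 / n := (htend.eventually (Filter.eventually_le_atBot (1/(n:ℝ)))).exists
  obtain ⟨K, hKle, hKmin⟩ : ∃ K, x K ≤ 1 / (n:ℝ) ∧ ∀ k < K, ¬ x k ≤ 1 / (n:ℝ) :=
    ⟨Nat.find hex, Nat.find_spec hex, fun k hk => Nat.find_min hex hk⟩
  refine ⟨K, ⟨hKle, hKmin⟩, ?_, ?_⟩
  · -- 0 < x K
    rcases Nat.eq_zero_or_pos K with h0 | hpos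
    · rw [h0, hx 0, pow_zero, one_mul, sub_pos, div_lt_one (by positivity)]
      linarith
    · obtain ⟨k, rfl⟩ : ∃ k, K = k + 1 := ⟨K - 1, by omega⟩
      have hk : ¬ x k ≤ 1 / n := hKmin k (by omega)
      push_neg at hk
      rw [hx k] at hk
      rw [hx (k+1), pow_succ]
      have hrk : (0:ℝ) < ((n:ℝ)/((n:ℝ)-1))^k := by positivity
      have h1 : ((n:ℝ)/((n:ℝ)-1))^k * ((n:ℝ)/(2*((n:ℝ)-1))) < 1 - 1/(n:ℝ) := by linarith
      have h2 : (1 - 1/(n:ℝ)) * ((n:ℝ)/((n:ℝ)-1)) = 1 := by field_simp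
      nlinarith [mul_pos hrk hc, hr1]
  · -- x K < 1/n
    rcases lt_or_eq_of_le hKle with h | h
    · exact h
    · exfalso
      rw [hx K] at h
      have hne : ((n:ℝ)-1) ≠ 0 := ne_of_gt hN1
      have hnne : (n:ℝ) ≠ 0 := ne_of_gt hNpos
      have key : (n:ℝ)^(K+2) = 2 * ((n:ℝ)-1)^(K+2) := by
        have := h
        rw [div_pow] at this
        field_simp at this
        ring_nf at this ⊢
        nlinarith [this, pow_pos hN1 K, pow_pos hNpos K]
      have hcast : ((n-1:ℕ):ℝ) = (n:ℝ) - 1 := by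
        push_cast [Nat.cast_sub (by omega : 1 ≤ n)]; ring
      have : ((n^(K+2) : ℕ) : ℝ) = ((2 * (n-1)^(K+2) : ℕ) : ℝ) := by
        rw [Nat.cast_pow, Nat.cast_mul, Nat.cast_pow, hcast, Nat.cast_ofNat]
        exact key
      have := Nat.cast_injective this
      exact pow_ne_two_mul n (K+2) hn (by omega) (by exact_mod_cast this)
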